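/- The following values of complementary Ramsey numbers hold: R̄(3,3,3) = 5, R̄(4,3,3) = 5, R̄(5,3,3) = 5, and R̄(6,3,3) = 6. -/

import Mathlib

open Finset

/-- The color-`i` graph `f⁻¹(i)` of an edge `k`-coloring `f` of the complete
graph on `Fin n`. -/
def colorGraph {n k : ℕ} (f : Sym2 (Fin n) → Fin k) (i : Fin k) :
    SimpleGraph (Fin n) where
  Adj x y := x ≠ y ∧ f s(x, y) = i
  symm := ⟨by
    rintro x y ⟨hxy, hf⟩
    exact ⟨hxy.symm, by rwa [Sym2.eq_swap]⟩⟩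
  loopless := ⟨by rintro x ⟨h, -⟩; exact h rfl⟩

/-- `α_i(f) ≥ m` : the graph `f⁻¹(i)` has an independent set of size `m`. -/
def HasIndep {n k : ℕ} (f : Sym2 (Fin n) → Fin k) (i : Fin k) (m : ℕ) : Prop :=
  ∃ s : Finset (Fin n), s.card = m ∧ ∀ x ∈ s, ∀ y ∈ s, x ≠ y → f s(x, y) ≠ i

/-- `ω_i(f) ≥ m` : the graph `f⁻¹(i)` has a clique of size `m`. -/
def HasClique {n k : ℕ} (f : Sym2 (Fin n) → Fin k) (i : Fin k) (m : ℕ) : Prop :=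
  ∃ s : Finset (Fin n), s.card = m ∧ ∀ x ∈ s, ∀ y ∈ s, x ≠ y → f s(x, y) = i

/-- The complementary Ramsey number `R̄(m 0, …, m (k-1))`: the least `n` such
that every edge `k`-coloring of `K_n` admits a color `i` with `α_i(f) ≥ m i`. -/
noncomputable def cRamsey {k : ℕ} (m : Fin k → ℕ) : ℕ :=
  sInf {n : ℕ | ∀ f : Sym2 (Fin n) → Fin k, ∃ i : Fin k, HasIndep f i (m i)}

/-- `R̄(m; k)`, i.e. `R̄(m, …, m)` with `m` repeated `k` times. -/
noncomputable def cRamseyU (m k : ℕ) : ℕ := cRamsey (fun _ : Fin k => m)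

/-- The classical multicolor Ramsey number `R(m 0, …, m (k-1))`. -/
noncomputable def ramsey {k : ℕ} (m : Fin k → ℕ) : ℕ :=
  sInf {n : ℕ | ∀ f : Sym2 (Fin n) → Fin k, ∃ i : Fin k, HasClique f i (m i)}

/-- `G` is the disjoint union of `r` copies of `K_{q+1}` and `n - r` copies of
`K_q`: there is a partition of the vertices into `n` parts, `r` of size `q+1`
and `n - r` of size `q`, with two vertices adjacent iff they are distinct and
lie in a common part. -/
def IsCliquePartition {N : ℕ} (G : SimpleGraph (Fin N)) (n q r : ℕ) : Prop :=
  ∃ P : Fin N → Fin n,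
    (∀ x y, G.Adj x y ↔ x ≠ y ∧ P x = P y) ∧
    ∀ j : Fin n,
      (Finset.univ.filter (fun x => P x = j)).card = if (j : ℕ) < r then q + 1 else q

/-- The family `H` of spanning subgraphs is a factorization of the complete
graph: every edge of `K_N` lies in exactly one of the `H i`. -/
def IsFactorization {N k : ℕ} (H : Fin k → SimpleGraph (Fin N)) : Prop :=
  ∀ x y : Fin N, x ≠ y → ∃! i : Fin k, (H i).Adj x y

/-- `f_i(x)`: the number of vertices `y ≠ x` with `f({x, y}) = i`. -/
def degColor {n k : ℕ} (f : Sym2 (Fin n) → Fin k) (i : Fin k) (x : Fin n) : ℕ :=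
  (Finset.univ.filter (fun y => y ≠ x ∧ f s(x, y) = i)).card

/-- `t̄_n(m)`: the number of edges of `T̄_n(m) = r K_{q+1} ∪ (n-r) K_q`, where
`m = n * q + r` with `0 ≤ r < n`. -/
def tbar (n m : ℕ) : ℕ :=
  (m % n) * Nat.choose (m / n + 1) 2 + (n - m % n) * Nat.choose (m / n) 2


def chk5 (v01 v02 v03 v04 v12 v13 v14 v23 v24 v34 : Fin 3) : Bool :=
  ((((v01 != 1 && (v02 != 1 && v12 != 1))) || (((v01 != 1 && (v03 != 1 && v13 != 1))) || (((v01 != 1 && (v04 != 1 && v14 != 1))) || (((v02 != 1 && (v03 != 1 && v23 != 1))) || (((v02 != 1 && (v04 != 1 && v24 != 1))) || (((v03 != 1 && (v04 != 1 && v34 != 1))) || (((v12 != 1 && (v13 != 1 && v23 != 1))) || (((v12 != 1 && (v14 != 1 && v24 != 1))) || (((v13 != 1 && (v14 != 1 && v34 != 1))) || ((v23 != 1 && (v24 != 1 && v34 != 1))))))))))))) || (((((v01 != 2 && (v02 != 2 && v12 != 2))) || (((v01 != 2 && (v03 != 2 && v13 != 2))) || (((v01 != 2 && (v04 != 2 &&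 v14 != 2))) || (((v02 != 2 && (v03 != 2 && v23 != 2))) || (((v02 != 2 && (v04 != 2 && v24 != 2))) || (((v03 != 2 && (v04 != 2 && v34 != 2))) || (((v12 != 2 && (v13 != 2 && v23 != 2))) || (((v12 != 2 && (v14 != 2 && v24 != 2))) || (((v13 != 2 && (v14 != 2 && v34 != 2))) || ((v23 != 2 && (v24 != 2 && v34 != 2))))))))))))) || ((v01 != 0 && (v02 != 0 && (v03 != 0 && (v04 != 0 && (v12 != 0 && (v13 != 0 && (v14 != 0 && (v23 != 0 && (v24 != 0 && v34 != 0)))))))))))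

set_option maxHeartbeats 1000000 in
theorem key5b : ∀ v01 v02 v03 v04 v12 v13 v14 v23 v24 v34 : Fin 3, chk5 v01 v02 v03 v04 v12 v13 v14 v23 v24 v34 = true := by decide

theorem key5 : ∀ v01 v02 v03 v04 v12 v13 v14 v23 v24 v34 : Fin 3,
    ((((v01 ≠ 1 ∧ (v02 ≠ 1 ∧ v12 ≠ 1))) ∨ (((v01 ≠ 1 ∧ (v03 ≠ 1 ∧ v13 ≠ 1))) ∨ (((v01 ≠ 1 ∧ (v04 ≠ 1 ∧ v14 ≠ 1))) ∨ (((v02 ≠ 1 ∧ (v03 ≠ 1 ∧ v23 ≠ 1))) ∨ (((v02 ≠ 1 ∧ (v04 ≠ 1 ∧ v24 ≠ 1))) ∨ (((v03 ≠ 1 ∧ (v04 ≠ 1 ∧ v34 ≠ 1))) ∨ (((v12 ≠ 1 ∧ (v13 ≠ 1 ∧ v23 ≠ 1))) ∨ (((v12 ≠ 1 ∧ (v14 ≠ 1 ∧ v24 ≠ 1))) ∨ (((v13 ≠ 1 ∧ (v14 ≠ 1 ∧ v34 ≠ 1))) ∨ ((v23 ≠ 1 ∧ (v24 ≠ 1 ∧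 v34 ≠ 1))))))))))))) ∨ (((((v01 ≠ 2 ∧ (v02 ≠ 2 ∧ v12 ≠ 2))) ∨ (((v01 ≠ 2 ∧ (v03 ≠ 2 ∧ v13 ≠ 2))) ∨ (((v01 ≠ 2 ∧ (v04 ≠ 2 ∧ v14 ≠ 2))) ∨ (((v02 ≠ 2 ∧ (v03 ≠ 2 ∧ v23 ≠ 2))) ∨ (((v02 ≠ 2 ∧ (v04 ≠ 2 ∧ v24 ≠ 2))) ∨ (((v03 ≠ 2 ∧ (v04 ≠ 2 ∧ v34 ≠ 2))) ∨ (((v12 ≠ 2 ∧ (v13 ≠ 2 ∧ v23 ≠ 2))) ∨ (((v12 ≠ 2 ∧ (v14 ≠ 2 ∧ v24 ≠ 2))) ∨ (((v13 ≠ 2 ∧ (v14 ≠ 2 ∧ v34 ≠ 2))) ∨ ((v23 ≠ 2 ∧ (v24 ≠ 2 ∧ v34 ≠ 2))))))))))))) ∨ ((v01 ≠ 0 ∧ (v02 ≠ 0 ∧ (v03 ≠ 0 ∧ (v04 ≠ 0 ∧ (v12 ≠ 0 ∧ (v13 ≠ 0 ∧ (v14 ≠ 0 ∧ (v23 ≠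 0 ∧ (v24 ≠ 0 ∧ v34 ≠ 0))))))))))) := by
  intro v01 v02 v03 v04 v12 v13 v14 v23 v24 v34
  have := key5b v01 v02 v03 v04 v12 v13 v14 v23 v24 v34
  simpa only [chk5, Bool.or_eq_true, Bool.and_eq_true, bne_iff_ne] using this

def chk6 (b01 b02 b03 b04 b05 b12 b13 b14 b15 b23 b24 b25 b34 b35 b45 : Bool) : Bool :=
  ((((b01 == true && (b02 == true && b12 == true))) || (((b01 == true && (b03 == true && b13 == true))) || (((b01 == true && (b04 == true && b14 == true))) || (((b01 == true && (b05 == true && b15 == true))) || (((b02 == true && (b03 == true && b23 == true))) || (((b02 == true && (b04 == true && b24 == true))) || (((b02 == true && (b05 == true && b25 == true))) || (((b03 == true && (b04 == true && b34 == true))) || (((b03 == true && (b05 == true && b35 == true))) || (((b04 == true && (b05 == true && b45 == true))) || (((b12 == true && (b13 == true && b23 == true))) || (((b12 == true && (b14 == true && b24 == true))) || (((b12 == true && (b15 == true && b25 == true))) || (((b13 == true && (b14 == true && b34 == true))) || (((b13 == true && (b15 == true && b35 == true))) || (((b14 == true && (b15 == true && b45 == true))) || (((b23 == true && (b24 ==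 true && b34 == true))) || (((b23 == true && (b25 == true && b35 == true))) || (((b24 == true && (b25 == true && b45 == true))) || ((b34 == true && (b35 == true && b45 == true))))))))))))))))))))))) || ((((b01 == false && (b02 == false && b12 == false))) || (((b01 == false && (b03 == false && b13 == false))) || (((b01 == false && (b04 == false && b14 == false))) || (((b01 == false && (b05 == false && b15 == false))) || (((b02 == false && (b03 == false && b23 == false))) || (((b02 == false && (b04 == false && b24 == false))) || (((b02 == false && (b05 == false && b25 == false))) || (((b03 == false && (b04 == false && b34 == false))) || (((b03 == false && (b05 == false && b35 == false))) || (((b04 == false && (b05 == false && b45 == false))) || (((b12 == false && (b13 == false && b23 == false))) || (((b12 == false && (b14 == false && b24 == false))) || (((b12 == false && (b15 == false && b25 == false))) || (((b13 == false && (b14 == false && b34 == false))) || (((b13 == false && (b15 == false && b35 == false))) || (((b14 == false && (b15 == false && b45 == false))) || (((b23 == false && (b24 == false && b34 == false))) || (((b23 == false && (b25 == false && b35 == false))) || (((b24 == false && (b25 == false && b45 == false))) || ((b34 == false && (b35 == false && b45 == false)))))))))))))))))))))))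

set_option maxHeartbeats 1000000 in
theorem key6b : ∀ b01 b02 b03 b04 b05 b12 b13 b14 b15 b23 b24 b25 b34 b35 b45 : Bool, chk6 b01 b02 b03 b04 b05 b12 b13 b14 b15 b23 b24 b25 b34 b35 b45 = true := by decide

theorem key6 : ∀ b01 b02 b03 b04 b05 b12 b13 b14 b15 b23 b24 b25 b34 b35 b45 : Bool,
    ((((b01 = true ∧ (b02 = true ∧ b12 = true))) ∨ (((b01 = true ∧ (b03 = true ∧ b13 = true))) ∨ (((b01 = true ∧ (b04 = true ∧ b14 = true))) ∨ (((b01 = true ∧ (b05 = true ∧ b15 = true))) ∨ (((b02 = true ∧ (b03 = true ∧ b23 = true))) ∨ (((b02 = true ∧ (b04 = true ∧ b24 = true))) ∨ (((b02 = true ∧ (b05 = true ∧ b25 = true))) ∨ (((b03 = true ∧ (b04 = true ∧ b34 = true))) ∨ (((b03 = true ∧ (b05 = true ∧ b35 = true))) ∨ (((b04 = true ∧ (b05 = true ∧ b45 = true))) ∨ (((b12 = true ∧ (b13 = true ∧ b23 = true))) ∨ (((b12 = true ∧ (b14 = true ∧ b24 = true))) ∨ (((b12 = true ∧ (b15 =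 true ∧ b25 = true))) ∨ (((b13 = true ∧ (b14 = true ∧ b34 = true))) ∨ (((b13 = true ∧ (b15 = true ∧ b35 = true))) ∨ (((b14 = true ∧ (b15 = true ∧ b45 = true))) ∨ (((b23 = true ∧ (b24 = true ∧ b34 = true))) ∨ (((b23 = true ∧ (b25 = true ∧ b35 = true))) ∨ (((b24 = true ∧ (b25 = true ∧ b45 = true))) ∨ ((b34 = true ∧ (b35 = true ∧ b45 = true))))))))))))))))))))))) ∨ ((((b01 = false ∧ (b02 = false ∧ b12 = false))) ∨ (((b01 = false ∧ (b03 = false ∧ b13 = false))) ∨ (((b01 = false ∧ (b04 = false ∧ b14 = false))) ∨ (((b01 = false ∧ (b05 = false ∧ b15 = false))) ∨ (((b02 = false ∧ (b03 = false ∧ b23 = false))) ∨ (((b02 = false ∧ (b04 = false ∧ b24 = false))) ∨ (((b02 = false ∧ (b05 = false ∧ b25 = false))) ∨ (((b03 = false ∧ (b04 = false ∧ b34 = false))) ∨ (((b03 = false ∧ (b05 = false ∧ b35 = false))) ∨ (((b04 = false ∧ (b05 = false ∧ b45 = false))) ∨ (((b12 = false ∧ (b13 = false ∧ b23 = false)))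 ∨ (((b12 = false ∧ (b14 = false ∧ b24 = false))) ∨ (((b12 = false ∧ (b15 = false ∧ b25 = false))) ∨ (((b13 = false ∧ (b14 = false ∧ b34 = false))) ∨ (((b13 = false ∧ (b15 = false ∧ b35 = false))) ∨ (((b14 = false ∧ (b15 = false ∧ b45 = false))) ∨ (((b23 = false ∧ (b24 = false ∧ b34 = false))) ∨ (((b23 = false ∧ (b25 = false ∧ b35 = false))) ∨ (((b24 = false ∧ (b25 = false ∧ b45 = false))) ∨ ((b34 = false ∧ (b35 = false ∧ b45 = false))))))))))))))))))))))) := by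
  intro b01 b02 b03 b04 b05 b12 b13 b14 b15 b23 b24 b25 b34 b35 b45
  have := key6b b01 b02 b03 b04 b05 b12 b13 b14 b15 b23 b24 b25 b34 b35 b45
  simpa only [chk6, Bool.or_eq_true, Bool.and_eq_true, beq_iff_eq] using this


lemma indep3 {n k : ℕ} (f : Sym2 (Fin n) → Fin k) (i : Fin k) (x y z : Fin n)
    (hxy : x ≠ y) (hxz : x ≠ z) (hyz : y ≠ z)
    (h1 : f s(x, y) ≠ i) (h2 : f s(x, z) ≠ i) (h3 : f s(y, z) ≠ i) :
    HasIndep f i 3 := by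
  refine ⟨{x, y, z}, ?_, ?_⟩
  · rw [Finset.card_insert_of_notMem (by simp [hxy, hxz]),
      Finset.card_insert_of_notMem (by simp [hyz]), Finset.card_singleton]
  · intro a ha b hb hab
    simp only [Finset.mem_insert, Finset.mem_singleton] at ha hb
    rcases ha with rfl | rfl | rfl <;> rcases hb with rfl | rfl | rfl <;>
      first
        | exact absurd rfl hab
        | assumption
        | (rw [Sym2.eq_swap]; assumption)

lemma HasIndep.mono {n k : ℕ} {f : Sym2 (Fin n) → Fin k} {i : Fin k} {a b : ℕ}
    (h : HasIndep f i b) (hle : a ≤ b) : HasIndep f i a := by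
  obtain ⟨s, hc, hs⟩ := h
  obtain ⟨t, hts, htc⟩ := Finset.exists_subset_card_eq (s := s) (n := a) (hc ▸ hle)
  exact ⟨t, htc, fun x hx y hy => hs x (hts hx) y (hts hy)⟩

lemma master5 (f : Sym2 (Fin 5) → Fin 3) :
    HasIndep f 1 3 ∨ HasIndep f 2 3 ∨ HasIndep f 0 5 := by
  have h := key5 (f s(0, 1)) (f s(0, 2)) (f s(0, 3)) (f s(0, 4)) (f s(1, 2)) (f s(1, 3)) (f s(1, 4)) (f s(2, 3)) (f s(2, 4)) (f s(3, 4))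
  rcases h with h | h | h
  · left
    rcases h with h | h | h | h | h | h | h | h | h | h
    · exact indep3 f 1 0 1 2 (by decide) (by decide) (by decide) h.1 h.2.1 h.2.2
    · exact indep3 f 1 0 1 3 (by decide) (by decide) (by decide) h.1 h.2.1 h.2.2
    · exact indep3 f 1 0 1 4 (by decide) (by decide) (by decide) h.1 h.2.1 h.2.2
    · exact indep3 f 1 0 2 3 (by decide) (by decide) (by decide) h.1 h.2.1 h.2.2
    · exact indep3 f 1 0 2 4 (by decide) (by decide) (by decide) h.1 h.2.1 h.2.2
    · exact indep3 f 1 0 3 4 (by decide) (by decide) (by decide) h.1 h.2.1 h.2.2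
    · exact indep3 f 1 1 2 3 (by decide) (by decide) (by decide) h.1 h.2.1 h.2.2
    · exact indep3 f 1 1 2 4 (by decide) (by decide) (by decide) h.1 h.2.1 h.2.2
    · exact indep3 f 1 1 3 4 (by decide) (by decide) (by decide) h.1 h.2.1 h.2.2
    · exact indep3 f 1 2 3 4 (by decide) (by decide) (by decide) h.1 h.2.1 h.2.2
  · right; left
    rcases h with h | h | h | h | h | h | h | h | h | h
    · exact indep3 f 2 0 1 2 (by decide) (by decide) (by decide) h.1 h.2.1 h.2.2
    · exact indep3 f 2 0 1 3 (by decide) (by decide) (by decide) h.1 h.2.1 h.2.2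
    · exact indep3 f 2 0 1 4 (by decide) (by decide) (by decide) h.1 h.2.1 h.2.2
    · exact indep3 f 2 0 2 3 (by decide) (by decide) (by decide) h.1 h.2.1 h.2.2
    · exact indep3 f 2 0 2 4 (by decide) (by decide) (by decide) h.1 h.2.1 h.2.2
    · exact indep3 f 2 0 3 4 (by decide) (by decide) (by decide) h.1 h.2.1 h.2.2
    · exact indep3 f 2 1 2 3 (by decide) (by decide) (by decide) h.1 h.2.1 h.2.2
    · exact indep3 f 2 1 2 4 (by decide) (by decide) (by decide) h.1 h.2.1 h.2.2
    · exact indep3 f 2 1 3 4 (by decide) (by decide) (by decide) h.1 h.2.1 h.2.2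
    · exact indep3 f 2 2 3 4 (by decide) (by decide) (by decide) h.1 h.2.1 h.2.2
  · right; right
    refine ⟨Finset.univ, by simp, ?_⟩
    obtain ⟨h01, h02, h03, h04, h12, h13, h14, h23, h24, h34⟩ := h
    intro x _ y _ hxy
    fin_cases x <;> fin_cases y <;>
      first
        | exact absurd rfl hxy
        | assumption
        | (rw [Sym2.eq_swap]; assumption)

lemma ne_one_of_eq_two {x : Fin 3} (h : x = 2) : x ≠ 1 := by subst h; decide

lemma master6 (f : Sym2 (Fin 6) → Fin 3) :
    HasIndep f 1 3 ∨ HasIndep f 2 3 := by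
  have h := key6 (decide (f s(0, 1) = 2)) (decide (f s(0, 2) = 2)) (decide (f s(0, 3) = 2)) (decide (f s(0, 4) = 2)) (decide (f s(0, 5) = 2)) (decide (f s(1, 2) = 2)) (decide (f s(1, 3) = 2)) (decide (f s(1, 4) = 2)) (decide (f s(1, 5) = 2)) (decide (f s(2, 3) = 2)) (decide (f s(2, 4) = 2)) (decide (f s(2, 5) = 2)) (decide (f s(3, 4) = 2)) (decide (f s(3, 5) = 2)) (decide (f s(4, 5) = 2))
  rcases h with h | h
  · left
    rcases h with h | h | h | h | h | h | h | h | h | h | h | h | h | h | h | h | h | h | h | h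
    · exact indep3 f 1 0 1 2 (by decide) (by decide) (by decide) (ne_one_of_eq_two (of_decide_eq_true h.1)) (ne_one_of_eq_two (of_decide_eq_true h.2.1)) (ne_one_of_eq_two (of_decide_eq_true h.2.2))
    · exact indep3 f 1 0 1 3 (by decide) (by decide) (by decide) (ne_one_of_eq_two (of_decide_eq_true h.1)) (ne_one_of_eq_two (of_decide_eq_true h.2.1)) (ne_one_of_eq_two (of_decide_eq_true h.2.2))
    · exact indep3 f 1 0 1 4 (by decide) (by decide) (by decide) (ne_one_of_eq_two (of_decide_eq_true h.1)) (ne_one_of_eq_two (of_decide_eq_true h.2.1)) (ne_one_of_eq_two (of_decide_eq_true h.2.2))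
    · exact indep3 f 1 0 1 5 (by decide) (by decide) (by decide) (ne_one_of_eq_two (of_decide_eq_true h.1)) (ne_one_of_eq_two (of_decide_eq_true h.2.1)) (ne_one_of_eq_two (of_decide_eq_true h.2.2))
    · exact indep3 f 1 0 2 3 (by decide) (by decide) (by decide) (ne_one_of_eq_two (of_decide_eq_true h.1)) (ne_one_of_eq_two (of_decide_eq_true h.2.1)) (ne_one_of_eq_two (of_decide_eq_true h.2.2))
    · exact indep3 f 1 0 2 4 (by decide) (by decide) (by decide) (ne_one_of_eq_two (of_decide_eq_true h.1)) (ne_one_of_eq_two (of_decide_eq_true h.2.1)) (ne_one_of_eq_two (of_decide_eq_true h.2.2))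
    · exact indep3 f 1 0 2 5 (by decide) (by decide) (by decide) (ne_one_of_eq_two (of_decide_eq_true h.1)) (ne_one_of_eq_two (of_decide_eq_true h.2.1)) (ne_one_of_eq_two (of_decide_eq_true h.2.2))
    · exact indep3 f 1 0 3 4 (by decide) (by decide) (by decide) (ne_one_of_eq_two (of_decide_eq_true h.1)) (ne_one_of_eq_two (of_decide_eq_true h.2.1)) (ne_one_of_eq_two (of_decide_eq_true h.2.2))
    · exact indep3 f 1 0 3 5 (by decide) (by decide) (by decide) (ne_one_of_eq_two (of_decide_eq_true h.1)) (ne_one_of_eq_two (of_decide_eq_true h.2.1)) (ne_one_of_eq_two (of_decide_eq_true h.2.2))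
    · exact indep3 f 1 0 4 5 (by decide) (by decide) (by decide) (ne_one_of_eq_two (of_decide_eq_true h.1)) (ne_one_of_eq_two (of_decide_eq_true h.2.1)) (ne_one_of_eq_two (of_decide_eq_true h.2.2))
    · exact indep3 f 1 1 2 3 (by decide) (by decide) (by decide) (ne_one_of_eq_two (of_decide_eq_true h.1)) (ne_one_of_eq_two (of_decide_eq_true h.2.1)) (ne_one_of_eq_two (of_decide_eq_true h.2.2))
    · exact indep3 f 1 1 2 4 (by decide) (by decide) (by decide) (ne_one_of_eq_two (of_decide_eq_true h.1)) (ne_one_of_eq_two (of_decide_eq_true h.2.1)) (ne_one_of_eq_two (of_decide_eq_true h.2.2))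
    · exact indep3 f 1 1 2 5 (by decide) (by decide) (by decide) (ne_one_of_eq_two (of_decide_eq_true h.1)) (ne_one_of_eq_two (of_decide_eq_true h.2.1)) (ne_one_of_eq_two (of_decide_eq_true h.2.2))
    · exact indep3 f 1 1 3 4 (by decide) (by decide) (by decide) (ne_one_of_eq_two (of_decide_eq_true h.1)) (ne_one_of_eq_two (of_decide_eq_true h.2.1)) (ne_one_of_eq_two (of_decide_eq_true h.2.2))
    · exact indep3 f 1 1 3 5 (by decide) (by decide) (by decide) (ne_one_of_eq_two (of_decide_eq_true h.1)) (ne_one_of_eq_two (of_decide_eq_true h.2.1)) (ne_one_of_eq_two (of_decide_eq_true h.2.2))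
    · exact indep3 f 1 1 4 5 (by decide) (by decide) (by decide) (ne_one_of_eq_two (of_decide_eq_true h.1)) (ne_one_of_eq_two (of_decide_eq_true h.2.1)) (ne_one_of_eq_two (of_decide_eq_true h.2.2))
    · exact indep3 f 1 2 3 4 (by decide) (by decide) (by decide) (ne_one_of_eq_two (of_decide_eq_true h.1)) (ne_one_of_eq_two (of_decide_eq_true h.2.1)) (ne_one_of_eq_two (of_decide_eq_true h.2.2))
    · exact indep3 f 1 2 3 5 (by decide) (by decide) (by decide) (ne_one_of_eq_two (of_decide_eq_true h.1)) (ne_one_of_eq_two (of_decide_eq_true h.2.1)) (ne_one_of_eq_two (of_decide_eq_true h.2.2))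
    · exact indep3 f 1 2 4 5 (by decide) (by decide) (by decide) (ne_one_of_eq_two (of_decide_eq_true h.1)) (ne_one_of_eq_two (of_decide_eq_true h.2.1)) (ne_one_of_eq_two (of_decide_eq_true h.2.2))
    · exact indep3 f 1 3 4 5 (by decide) (by decide) (by decide) (ne_one_of_eq_two (of_decide_eq_true h.1)) (ne_one_of_eq_two (of_decide_eq_true h.2.1)) (ne_one_of_eq_two (of_decide_eq_true h.2.2))
  · right
    rcases h with h | h | h | h | h | h | h | h | h | h | h | h | h | h | h | h | h | h | h | h
    · exact indep3 f 2 0 1 2 (by decide) (by decide) (by decide) (of_decide_eq_false h.1) (of_decide_eq_false h.2.1) (of_decide_eq_false h.2.2)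
    · exact indep3 f 2 0 1 3 (by decide) (by decide) (by decide) (of_decide_eq_false h.1) (of_decide_eq_false h.2.1) (of_decide_eq_false h.2.2)
    · exact indep3 f 2 0 1 4 (by decide) (by decide) (by decide) (of_decide_eq_false h.1) (of_decide_eq_false h.2.1) (of_decide_eq_false h.2.2)
    · exact indep3 f 2 0 1 5 (by decide) (by decide) (by decide) (of_decide_eq_false h.1) (of_decide_eq_false h.2.1) (of_decide_eq_false h.2.2)
    · exact indep3 f 2 0 2 3 (by decide) (by decide) (by decide) (of_decide_eq_false h.1) (of_decide_eq_false h.2.1) (of_decide_eq_false h.2.2)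
    · exact indep3 f 2 0 2 4 (by decide) (by decide) (by decide) (of_decide_eq_false h.1) (of_decide_eq_false h.2.1) (of_decide_eq_false h.2.2)
    · exact indep3 f 2 0 2 5 (by decide) (by decide) (by decide) (of_decide_eq_false h.1) (of_decide_eq_false h.2.1) (of_decide_eq_false h.2.2)
    · exact indep3 f 2 0 3 4 (by decide) (by decide) (by decide) (of_decide_eq_false h.1) (of_decide_eq_false h.2.1) (of_decide_eq_false h.2.2)
    · exact indep3 f 2 0 3 5 (by decide) (by decide) (by decide) (of_decide_eq_false h.1) (of_decide_eq_false h.2.1) (of_decide_eq_false h.2.2)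
    · exact indep3 f 2 0 4 5 (by decide) (by decide) (by decide) (of_decide_eq_false h.1) (of_decide_eq_false h.2.1) (of_decide_eq_false h.2.2)
    · exact indep3 f 2 1 2 3 (by decide) (by decide) (by decide) (of_decide_eq_false h.1) (of_decide_eq_false h.2.1) (of_decide_eq_false h.2.2)
    · exact indep3 f 2 1 2 4 (by decide) (by decide) (by decide) (of_decide_eq_false h.1) (of_decide_eq_false h.2.1) (of_decide_eq_false h.2.2)
    · exact indep3 f 2 1 2 5 (by decide) (by decide) (by decide) (of_decide_eq_false h.1) (of_decide_eq_false h.2.1) (of_decide_eq_false h.2.2)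
    · exact indep3 f 2 1 3 4 (by decide) (by decide) (by decide) (of_decide_eq_false h.1) (of_decide_eq_false h.2.1) (of_decide_eq_false h.2.2)
    · exact indep3 f 2 1 3 5 (by decide) (by decide) (by decide) (of_decide_eq_false h.1) (of_decide_eq_false h.2.1) (of_decide_eq_false h.2.2)
    · exact indep3 f 2 1 4 5 (by decide) (by decide) (by decide) (of_decide_eq_false h.1) (of_decide_eq_false h.2.1) (of_decide_eq_false h.2.2)
    · exact indep3 f 2 2 3 4 (by decide) (by decide) (by decide) (of_decide_eq_false h.1) (of_decide_eq_false h.2.1) (of_decide_eq_false h.2.2)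
    · exact indep3 f 2 2 3 5 (by decide) (by decide) (by decide) (of_decide_eq_false h.1) (of_decide_eq_false h.2.1) (of_decide_eq_false h.2.2)
    · exact indep3 f 2 2 4 5 (by decide) (by decide) (by decide) (of_decide_eq_false h.1) (of_decide_eq_false h.2.1) (of_decide_eq_false h.2.2)
    · exact indep3 f 2 3 4 5 (by decide) (by decide) (by decide) (of_decide_eq_false h.1) (of_decide_eq_false h.2.1) (of_decide_eq_false h.2.2)


lemma mono_mem {k : ℕ} (m : Fin k → ℕ) {n n' : ℕ} (h : n ≤ n')
    (hn : ∀ f : Sym2 (Fin n) → Fin k, ∃ i, HasIndep f i (m i)) :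
    ∀ f : Sym2 (Fin n') → Fin k, ∃ i, HasIndep f i (m i) := by
  intro f
  obtain ⟨i, s, hc, hs⟩ := hn (fun p => f (p.map (Fin.castLE h)))
  refine ⟨i, s.map ⟨Fin.castLE h, Fin.castLE_injective h⟩, by simp [hc], ?_⟩
  simp only [Finset.mem_map, Function.Embedding.coeFn_mk]
  rintro x ⟨a, ha, rfl⟩ y ⟨b, hb, rfl⟩ hxy
  have hab : a ≠ b := fun hh => hxy (by rw [hh])
  have := hs a ha b hb hab
  simpa only [Sym2.map_pair_eq] using this

lemma cRamsey_eq {k : ℕ} (m : Fin k → ℕ) (N : ℕ)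
    (hN : ∀ f : Sym2 (Fin N) → Fin k, ∃ i, HasIndep f i (m i))
    (hN1 : ¬ ∀ f : Sym2 (Fin (N - 1)) → Fin k, ∃ i, HasIndep f i (m i)) :
    cRamsey m = N := by
  refine le_antisymm (Nat.sInf_le hN) (le_csInf ⟨N, hN⟩ ?_)
  intro n hn
  by_contra hlt
  push_neg at hlt
  exact hN1 (mono_mem m (by omega) hn)

def f4 : Sym2 (Fin 4) → Fin 3 :=
  Sym2.lift ⟨fun x y => if x.val ^^^ y.val = 1 then 0 else if x.val ^^^ y.val = 2 then 1 else 2,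
    by decide⟩

def f5 : Sym2 (Fin 5) → Fin 3 :=
  Sym2.lift ⟨fun x y => if (x.val + 1) % 5 = y.val ∨ (y.val + 1) % 5 = x.val then 1 else 2,
    by decide⟩

lemma not4_333 : ¬ ∃ i : Fin 3, HasIndep f4 i (![3, 3, 3] i) := by
  unfold HasIndep; decide

lemma not4_433 : ¬ ∃ i : Fin 3, HasIndep f4 i (![4, 3, 3] i) := by
  unfold HasIndep; decide

lemma not4_533 : ¬ ∃ i : Fin 3, HasIndep f4 i (![5, 3, 3] i) := by
  unfold HasIndep; decide

lemma not5_633 : ¬ ∃ i : Fin 3, HasIndep f5 i (![6, 3, 3] i) := by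
  unfold HasIndep; decide

lemma mem333 : ∀ f : Sym2 (Fin 5) → Fin 3, ∃ i, HasIndep f i (![3, 3, 3] i) := by
  intro f
  rcases master5 f with h | h | h
  · exact ⟨1, h⟩
  · exact ⟨2, h⟩
  · exact ⟨0, h.mono (by decide)⟩

lemma mem433 : ∀ f : Sym2 (Fin 5) → Fin 3, ∃ i, HasIndep f i (![4, 3, 3] i) := by
  intro f
  rcases master5 f with h | h | h
  · exact ⟨1, h⟩
  · exact ⟨2, h⟩
  · exact ⟨0, h.mono (by decide)⟩

lemma mem533 : ∀ f : Sym2 (Fin 5) → Fin 3, ∃ i, HasIndep f i (![5, 3, 3] i) := by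
  intro f
  rcases master5 f with h | h | h
  · exact ⟨1, h⟩
  · exact ⟨2, h⟩
  · exact ⟨0, h⟩

lemma mem633 : ∀ f : Sym2 (Fin 6) → Fin 3, ∃ i, HasIndep f i (![6, 3, 3] i) := by
  intro f
  rcases master6 f with h | h
  · exact ⟨1, h⟩
  · exact ⟨2, h⟩

/-- `R̄(3,3,3) = 5`, `R̄(4,3,3) = 5`, `R̄(5,3,3) = 5`, `R̄(6,3,3) = 6`. -/
theorem cRamsey_small_values_one :
    cRamsey ![3, 3, 3] = 5 ∧ cRamsey ![4, 3, 3] = 5 ∧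
      cRamsey ![5, 3, 3] = 5 ∧ cRamsey ![6, 3, 3] = 6 := by
  refine ⟨cRamsey_eq _ 5 mem333 ?_, cRamsey_eq _ 5 mem433 ?_,
    cRamsey_eq _ 5 mem533 ?_, cRamsey_eq _ 6 mem633 ?_⟩
  · exact fun h => not4_333 (h f4)
  · exact fun h => not4_433 (h f4)
  · exact fun h => not4_533 (h f4)
  · exact fun h => not5_633 (h f5)
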